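/- Let A and B be generalized Boolean algebras of finite type, let C be a generalized Boolean algebra, and let f : C → A and g : C → B be injective lattice homomorphisms with f(⊥) = ⊥ and g(⊥) = ⊥ (such maps automatically preserve relative complements). Assume: (i) for every c ∈ C, the (finite) number of atoms of A below f(c) equals the number of atoms of B below g(c); and (ii) the cardinality of the set of atoms of A that are not below f(c) for any c ∈ C equals the cardinality of the set of atoms of B that are not below g(c) for any c ∈ C. Then there is an isomorphism h : A → B of generalized Boolean algebras (an order isomorphism) such that h ∘ f = g. -/

import Mathlib

section helpers
variable {α : Type*} [GeneralizedBooleanAlgebra α]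

theorem myAtomSupPrime {a : α} (ha : IsAtom a) : SupPrime a := by
  constructor
  · intro h
    exact ha.1 (le_antisymm (h bot_le) bot_le)
  · intro b c h
    have h1 : a ⊓ b = ⊥ ∨ a ⊓ b = a := ha.le_iff.mp inf_le_left
    rcases h1 with h1 | h1
    · right
      have h2 : a = (a ⊓ b) ⊔ (a ⊓ c) := by rw [← inf_sup_left, inf_eq_left.mpr h]
      rw [h1, bot_sup_eq] at h2
      exact inf_eq_left.mp h2.symm
    · left; exact inf_eq_left.mp h1

theorem myAtomLeSup {a : α} (ha : IsAtom a) {s : Finset α} (h : a ≤ s.sup id) :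
    ∃ b ∈ s, a ≤ b := (myAtomSupPrime ha).le_finset_sup.mp h

variable (hA : ∀ x : α, ∃ s : Finset α, (∀ a ∈ s, IsAtom a) ∧ s.sup id = x)
include hA

theorem myLeOfAtoms {x y : α} (h : ∀ a, IsAtom a → a ≤ x → a ≤ y) : x ≤ y := by
  obtain ⟨s, hs, rfl⟩ := hA x
  exact Finset.sup_le fun a hm => h a (hs a hm) (Finset.le_sup (f := id) hm)

theorem myFiniteAtoms (x : α) : {a : α | IsAtom a ∧ a ≤ x}.Finite := by
  obtain ⟨s, hs, rfl⟩ := hA x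
  apply Set.Finite.subset s.finite_toSet
  rintro a ⟨ha, hle⟩
  obtain ⟨b, hb, hab⟩ := myAtomLeSup ha hle
  rwa [((hs b hb).le_iff.mp hab).resolve_left ha.1]

end helpers

section label
universe u v
variable {A : Type u} {C : Type v} [GeneralizedBooleanAlgebra A] [GeneralizedBooleanAlgebra C]
variable (hA : ∀ x : A, ∃ s : Finset A, (∀ a ∈ s, IsAtom a) ∧ s.sup id = x)
variable (f : LatticeHom C A) (hf : Function.Injective f)
include hA hf

theorem myIicFinite (c : C) : {c' : C | c' ≤ c}.Finite := by
  have key : Set.InjOn (fun c' => (myFiniteAtoms hA (f c')).toFinset) {c' | c' ≤ c} := by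
    intro x hx y hy hxy
    simp only at hxy
    have hsets : ∀ a : A, (IsAtom a ∧ a ≤ f x) ↔ (IsAtom a ∧ a ≤ f y) := by
      intro a
      constructor
      · intro h
        have : a ∈ (myFiniteAtoms hA (f y)).toFinset := by
          rw [← hxy]; simpa [Set.Finite.mem_toFinset] using h
        simpa [Set.Finite.mem_toFinset] using this
      · intro h
        have : a ∈ (myFiniteAtoms hA (f x)).toFinset := by
          rw [hxy]; simpa [Set.Finite.mem_toFinset] using h
        simpa [Set.Finite.mem_toFinset] using this
    apply hf
    apply le_antisymm
    · exact myLeOfAtoms hA fun a ha hle => ((hsets a).mp ⟨ha, hle⟩).2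
    · exact myLeOfAtoms hA fun a ha hle => ((hsets a).mpr ⟨ha, hle⟩).2
  apply Set.Finite.of_finite_image _ key
  apply Set.Finite.subset ((myFiniteAtoms hA (f c)).toFinset.powerset.finite_toSet)
  rintro s ⟨c', hc', rfl⟩
  simp only [Finset.coe_powerset, Set.mem_preimage, Set.mem_powerset_iff, Finset.coe_subset]
  rw [Finset.subset_iff]
  intro a haa
  simp only [Set.Finite.mem_toFinset] at haa ⊢
  exact ⟨haa.1, haa.2.trans (OrderHomClass.mono f hc')⟩

theorem myLabelExists {a : A} (ha : IsAtom a) {c0 : C} (h0 : a ≤ f c0) :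
    ∃ m : C, ∀ c : C, a ≤ f c ↔ m ≤ c := by
  set T : Set C := {c' | c' ≤ c0 ∧ a ≤ f c'} with hTdef
  have hT : T.Finite := (myIicFinite hA f hf c0).subset fun x hx => hx.1
  have hne : hT.toFinset.Nonempty := ⟨c0, by simp [hTdef, h0]⟩
  have hclosed : ∀ x ∈ T, ∀ y ∈ T, x ⊓ y ∈ T := by
    rintro x ⟨hx1, hx2⟩ y ⟨hy1, hy2⟩
    exact ⟨inf_le_left.trans hx1, by rw [map_inf]; exact le_inf hx2 hy2⟩
  set m := hT.toFinset.inf' hne id with hmdef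
  have hmT : m ∈ T := Finset.inf'_mem T hclosed _ hne id
    (fun i hi => by simpa using hi)
  refine ⟨m, fun c => ⟨fun hc => ?_, fun hc => hmT.2.trans (OrderHomClass.mono f hc)⟩⟩
  · have hmem : m ⊓ c ∈ hT.toFinset := by
      simp only [Set.Finite.mem_toFinset]
      exact ⟨inf_le_left.trans hmT.1, by rw [map_inf]; exact le_inf hmT.2 hc⟩
    exact (Finset.inf'_le id hmem).trans inf_le_right

end label

section count
universe u v
variable {A : Type u} {C : Type v} [GeneralizedBooleanAlgebra A] [GeneralizedBooleanAlgebra C]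
variable (hA : ∀ x : A, ∃ s : Finset A, (∀ a ∈ s, IsAtom a) ∧ s.sup id = x)
variable (f : LatticeHom C A) (hf : Function.Injective f)
include hf

theorem myPartition (c : C) (ℓ : A → C)
    (hℓ : ∀ a, IsAtom a → (∃ c0, a ≤ f c0) → ∀ c', a ≤ f c' ↔ ℓ a ≤ c') :
    (myFiniteAtoms hA (f c)).toFinset.card
      = ∑ c' ∈ (myIicFinite hA f hf c).toFinset,
          ({a : A | IsAtom a ∧ ∀ c'', a ≤ f c'' ↔ c' ≤ c''}).ncard := by
  classical
  rw [Finset.card_eq_sum_card_fiberwise (f := ℓ)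
    (t := (myIicFinite hA f hf c).toFinset)]
  · apply Finset.sum_congr rfl
    intro c' hc'
    rw [Set.Finite.mem_toFinset] at hc'
    have hfin : ({a : A | IsAtom a ∧ ∀ c'', a ≤ f c'' ↔ c' ≤ c''}).Finite :=
      (myFiniteAtoms hA (f c')).subset (fun a ha => ⟨ha.1, (ha.2 c').mpr le_rfl⟩)
    rw [Set.ncard_eq_toFinset_card _ hfin]
    congr 1
    ext a
    simp only [Finset.mem_filter, Set.Finite.mem_toFinset, Set.mem_setOf_eq]
    constructor
    · rintro ⟨⟨ha, hle⟩, hla⟩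
      exact ⟨ha, hla ▸ hℓ a ha ⟨c, hle⟩⟩
    · rintro ⟨ha, hlab⟩
      have hle : a ≤ f c' := (hlab c').mpr le_rfl
      have hlab' := hℓ a ha ⟨c', hle⟩
      refine ⟨⟨ha, hle.trans (OrderHomClass.mono f hc')⟩, ?_⟩
      exact le_antisymm ((hlab' c').mp hle) ((hlab (ℓ a)).mp ((hlab' (ℓ a)).mpr le_rfl))
  · intro a ha
    rw [Finset.mem_coe, Set.Finite.mem_toFinset] at ha ⊢
    exact (hℓ a ha.1 ⟨c, ha.2⟩ c).mp ha.2

end count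

section counteq
universe u u' v
variable {A : Type u} {B : Type u'} {C : Type v}
variable [GeneralizedBooleanAlgebra A] [GeneralizedBooleanAlgebra B]
  [GeneralizedBooleanAlgebra C]

theorem myAtomsFinsetInj (hA : ∀ x : A, ∃ s : Finset A, (∀ a ∈ s, IsAtom a) ∧ s.sup id = x)
    {x y : A} (h : (myFiniteAtoms hA x).toFinset = (myFiniteAtoms hA y).toFinset) : x = y := by
  have h' : {a : A | IsAtom a ∧ a ≤ x} = {a : A | IsAtom a ∧ a ≤ y} := by
    rw [← (myFiniteAtoms hA x).coe_toFinset, ← (myFiniteAtoms hA y).coe_toFinset, h]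
  apply le_antisymm
  · exact myLeOfAtoms hA fun a ha hle => (h' ▸ (show a ∈ {a : A | IsAtom a ∧ a ≤ x} from ⟨ha, hle⟩)).2
  · exact myLeOfAtoms hA fun a ha hle => (h'.symm ▸ (show a ∈ {a : A | IsAtom a ∧ a ≤ y} from ⟨ha, hle⟩)).2

theorem myNatCardConv (hA : ∀ x : A, ∃ s : Finset A, (∀ a ∈ s, IsAtom a) ∧ s.sup id = x)
    (x : A) : Nat.card {a : A // IsAtom a ∧ a ≤ x} = (myFiniteAtoms hA x).toFinset.card := by
  rw [← Set.ncard_eq_toFinset_card _ (myFiniteAtoms hA x), ← Nat.card_coe_set_eq]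
  rfl

theorem myCountEq (hA : ∀ x : A, ∃ s : Finset A, (∀ a ∈ s, IsAtom a) ∧ s.sup id = x)
    (hB : ∀ x : B, ∃ s : Finset B, (∀ a ∈ s, IsAtom a) ∧ s.sup id = x)
    (f : LatticeHom C A) (g : LatticeHom C B)
    (hf : Function.Injective f) (hg : Function.Injective g)
    (hcount : ∀ c : C,
      Nat.card {a : A // IsAtom a ∧ a ≤ f c} = Nat.card {b : B // IsAtom b ∧ b ≤ g c}) :
    ∀ c : C, ({a : A | IsAtom a ∧ ∀ c', a ≤ f c' ↔ c ≤ c'}).ncard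
      = ({b : B | IsAtom b ∧ ∀ c', b ≤ g c' ↔ c ≤ c'}).ncard := by
  suffices H : ∀ n c, (myFiniteAtoms hA (f c)).toFinset.card = n →
      ({a : A | IsAtom a ∧ ∀ c', a ≤ f c' ↔ c ≤ c'}).ncard
      = ({b : B | IsAtom b ∧ ∀ c', b ≤ g c' ↔ c ≤ c'}).ncard by
    intro c; exact H _ c rfl
  intro n
  induction n using Nat.strong_induction_on with
  | _ n ih =>
  intro c hn
  classical
  set ℓf : A → C := fun a => if h : ∃ m, ∀ c', a ≤ f c' ↔ m ≤ c' then h.choose else c with hℓf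
  set ℓg : B → C := fun b => if h : ∃ m, ∀ c', b ≤ g c' ↔ m ≤ c' then h.choose else c with hℓg
  have hℓfspec : ∀ a, IsAtom a → (∃ c0, a ≤ f c0) → ∀ c', a ≤ f c' ↔ ℓf a ≤ c' := by
    intro a ha ⟨c0, hc0⟩
    have hex : ∃ m, ∀ c', a ≤ f c' ↔ m ≤ c' := myLabelExists hA f hf ha hc0
    simp only [hℓf, dif_pos hex]
    exact hex.choose_spec
  have hℓgspec : ∀ b, IsAtom b → (∃ c0, b ≤ g c0) → ∀ c', b ≤ g c' ↔ ℓg b ≤ c' := by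
    intro b hb ⟨c0, hc0⟩
    have hex : ∃ m, ∀ c', b ≤ g c' ↔ m ≤ c' := myLabelExists hB g hg hb hc0
    simp only [hℓg, dif_pos hex]
    exact hex.choose_spec
  have Pf := myPartition hA f hf c ℓf hℓfspec
  have Pg := myPartition hB g hg c ℓg hℓgspec
  have hIic : (myIicFinite hB g hg c).toFinset = (myIicFinite hA f hf c).toFinset :=
    Set.Finite.toFinset_inj.mpr rfl
  rw [hIic] at Pg
  have hN : (myFiniteAtoms hA (f c)).toFinset.card = (myFiniteAtoms hB (g c)).toFinset.card := by
    rw [← myNatCardConv hA, ← myNatCardConv hB]; exact hcount c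
  have hcmem : c ∈ (myIicFinite hA f hf c).toFinset := by
    rw [Set.Finite.mem_toFinset]; exact le_rfl
  rw [← Finset.sum_erase_add _ _ hcmem] at Pf Pg
  have hsum : ∑ c' ∈ (myIicFinite hA f hf c).toFinset.erase c,
        ({a : A | IsAtom a ∧ ∀ c'', a ≤ f c'' ↔ c' ≤ c''}).ncard
      = ∑ c' ∈ (myIicFinite hA f hf c).toFinset.erase c,
        ({b : B | IsAtom b ∧ ∀ c'', b ≤ g c'' ↔ c' ≤ c''}).ncard := by
    apply Finset.sum_congr rfl
    intro c' hc'
    have hne : c' ≠ c := (Finset.mem_erase.mp hc').1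
    have hlec : c' ≤ c := by
      have := (Finset.mem_erase.mp hc').2
      rwa [Set.Finite.mem_toFinset] at this
    apply ih _ _ c' rfl
    rw [← hn]
    apply Finset.card_lt_card
    constructor
    · intro a ha
      rw [Set.Finite.mem_toFinset] at ha ⊢
      exact ⟨ha.1, ha.2.trans (OrderHomClass.mono f hlec)⟩
    · intro hsub
      have heq : (myFiniteAtoms hA (f c)).toFinset = (myFiniteAtoms hA (f c')).toFinset := by
        apply Finset.Subset.antisymm hsub
        intro a ha
        rw [Set.Finite.mem_toFinset] at ha ⊢
        exact ⟨ha.1, ha.2.trans (OrderHomClass.mono f hlec)⟩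
      exact hne (hf (myAtomsFinsetInj hA heq.symm))
  omega

end counteq

section sigma
universe u v
variable {A : Type u} {B : Type u} {C : Type v}
variable [GeneralizedBooleanAlgebra A] [GeneralizedBooleanAlgebra B]
  [GeneralizedBooleanAlgebra C]

theorem mySigma (hA : ∀ x : A, ∃ s : Finset A, (∀ a ∈ s, IsAtom a) ∧ s.sup id = x)
    (hB : ∀ x : B, ∃ s : Finset B, (∀ a ∈ s, IsAtom a) ∧ s.sup id = x)
    (f : LatticeHom C A) (g : LatticeHom C B)
    (hf : Function.Injective f) (hg : Function.Injective g)
    (hcount : ∀ c : C,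
      Nat.card {a : A // IsAtom a ∧ a ≤ f c} = Nat.card {b : B // IsAtom b ∧ b ≤ g c})
    (hout : Cardinal.mk {a : A // IsAtom a ∧ ∀ c : C, ¬ a ≤ f c}
          = Cardinal.mk {b : B // IsAtom b ∧ ∀ c : C, ¬ b ≤ g c}) :
    ∃ σ : {a : A // IsAtom a} ≃ {b : B // IsAtom b},
      ∀ (a : {a : A // IsAtom a}) (c : C), (a : A) ≤ f c ↔ ((σ a : B) ≤ g c) := by
  classical
  -- fiber equivalences
  have hfibAfin : ∀ c : C, ({a : A | IsAtom a ∧ ∀ c', a ≤ f c' ↔ c ≤ c'}).Finite := fun c =>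
    (myFiniteAtoms hA (f c)).subset (fun a ha => ⟨ha.1, (ha.2 c).mpr le_rfl⟩)
  have hfibBfin : ∀ c : C, ({b : B | IsAtom b ∧ ∀ c', b ≤ g c' ↔ c ≤ c'}).Finite := fun c =>
    (myFiniteAtoms hB (g c)).subset (fun b hb => ⟨hb.1, (hb.2 c).mpr le_rfl⟩)
  have hEex : ∀ c : C, Nonempty
      ({a : A // IsAtom a ∧ ∀ c', a ≤ f c' ↔ c ≤ c'} ≃
       {b : B // IsAtom b ∧ ∀ c', b ≤ g c' ↔ c ≤ c'}) := by
    intro c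
    haveI F1 : Finite {a : A // IsAtom a ∧ ∀ c', a ≤ f c' ↔ c ≤ c'} :=
      (hfibAfin c).to_subtype
    haveI F2 : Finite {b : B // IsAtom b ∧ ∀ c', b ≤ g c' ↔ c ≤ c'} :=
      (hfibBfin c).to_subtype
    refine Finite.card_eq.mp ?_
    exact (Nat.card_coe_set_eq _).trans
      ((myCountEq hA hB f g hf hg hcount c).trans (Nat.card_coe_set_eq _).symm)
  set E := fun c => (hEex c).some with hE
  obtain ⟨O⟩ : Nonempty ({a : A // IsAtom a ∧ ∀ c : C, ¬ a ≤ f c} ≃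
      {b : B // IsAtom b ∧ ∀ c : C, ¬ b ≤ g c}) := Cardinal.eq.mp hout
  -- congruence helpers for E
  have Econgr : ∀ (c c' : C), c = c' →
      ∀ (x : {a : A // IsAtom a ∧ ∀ c'', a ≤ f c'' ↔ c ≤ c''})
        (x' : {a : A // IsAtom a ∧ ∀ c'', a ≤ f c'' ↔ c' ≤ c''}),
        (x : A) = (x' : A) → ((E c x : B) = (E c' x' : B)) := by
    rintro c c' rfl x x' hxx
    have : x = x' := Subtype.ext hxx
    rw [this]
  have Econgr' : ∀ (c c' : C), c = c' →
      ∀ (x : {a : A // IsAtom a ∧ ∀ c'', a ≤ f c'' ↔ c ≤ c''})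
        (x' : {a : A // IsAtom a ∧ ∀ c'', a ≤ f c'' ↔ c' ≤ c''}),
        ((E c x : B) = (E c' x' : B)) → (x : A) = (x' : A) := by
    rintro c c' rfl x x' hxx
    have : E c x = E c x' := Subtype.ext hxx
    rw [(E c).injective this]
  -- the forward map
  set σfun : {a : A // IsAtom a} → {b : B // IsAtom b} := fun a =>
    if h : ∃ c, (a : A) ≤ f c then
      ⟨(E (myLabelExists hA f hf a.2 h.choose_spec).choose
          ⟨a.1, a.2, (myLabelExists hA f hf a.2 h.choose_spec).choose_spec⟩ : B),
        (E (myLabelExists hA f hf a.2 h.choose_spec).choose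
          ⟨a.1, a.2, (myLabelExists hA f hf a.2 h.choose_spec).choose_spec⟩).2.1⟩
    else
      ⟨(O ⟨a.1, a.2, fun c hc => h ⟨c, hc⟩⟩ : B), (O ⟨a.1, a.2, fun c hc => h ⟨c, hc⟩⟩).2.1⟩
    with hσfun
  -- behavior on the inside
  have hin : ∀ (a : {a : A // IsAtom a}) (h : ∃ c, (a : A) ≤ f c),
      ∀ c', ((σfun a : B) ≤ g c' ↔
        (myLabelExists hA f hf a.2 h.choose_spec).choose ≤ c') := by
    intro a h c'
    rw [hσfun]
    simp only [dif_pos h]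
    exact (E (myLabelExists hA f hf a.2 h.choose_spec).choose
          ⟨a.1, a.2, (myLabelExists hA f hf a.2 h.choose_spec).choose_spec⟩).2.2 c'
  have hout' : ∀ (a : {a : A // IsAtom a}) (h : ¬ ∃ c, (a : A) ≤ f c),
      ∀ c', ¬ ((σfun a : B) ≤ g c') := by
    intro a h c'
    rw [hσfun]
    simp only [dif_neg h]
    exact (O ⟨a.1, a.2, fun c hc => h ⟨c, hc⟩⟩).2.2 c'
  -- the key property
  have hprop : ∀ (a : {a : A // IsAtom a}) (c : C), (a : A) ≤ f c ↔ ((σfun a : B) ≤ g c) := by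
    intro a c
    by_cases h : ∃ c0, (a : A) ≤ f c0
    · rw [(myLabelExists hA f hf a.2 h.choose_spec).choose_spec c, hin a h c]
    · exact ⟨fun hc => absurd ⟨c, hc⟩ h, fun hc => absurd hc (hout' a h c)⟩
  have hinj : Function.Injective σfun := by
    intro a a' heq
    by_cases h : ∃ c0, (a : A) ≤ f c0
    · by_cases h' : ∃ c0, (a' : A) ≤ f c0
      · -- both inside: labels agree
        set m := (myLabelExists hA f hf a.2 h.choose_spec).choose with hm
        set m' := (myLabelExists hA f hf a'.2 h'.choose_spec).choose with hm'
        have hmm : m = m' := by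
          have h1 := hin a h
          have h2 := hin a' h'
          rw [heq] at h1
          exact le_antisymm ((h1 m').mp ((h2 m').mpr le_rfl)) ((h2 m).mp ((h1 m).mpr le_rfl))
        apply Subtype.ext
        refine Econgr' m m' hmm ⟨a.1, a.2, (myLabelExists hA f hf a.2 h.choose_spec).choose_spec⟩
          ⟨a'.1, a'.2, (myLabelExists hA f hf a'.2 h'.choose_spec).choose_spec⟩ ?_
        have e1 : (σfun a : B) = (E m ⟨a.1, a.2,
            (myLabelExists hA f hf a.2 h.choose_spec).choose_spec⟩ : B) := by
          rw [hσfun]; simp only [dif_pos h]; rfl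
        have e2 : (σfun a' : B) = (E m' ⟨a'.1, a'.2,
            (myLabelExists hA f hf a'.2 h'.choose_spec).choose_spec⟩ : B) := by
          rw [hσfun]; simp only [dif_pos h']; rfl
        rw [← e1, ← e2, heq]
      · exfalso
        obtain ⟨c0, hc0⟩ := h
        have : (σfun a : B) ≤ g c0 := (hprop a c0).mp hc0
        rw [heq] at this
        exact hout' a' h' c0 this
    · by_cases h' : ∃ c0, (a' : A) ≤ f c0
      · exfalso
        obtain ⟨c0, hc0⟩ := h'
        have : (σfun a' : B) ≤ g c0 := (hprop a' c0).mp hc0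
        rw [← heq] at this
        exact hout' a h c0 this
      · have e1 : (σfun a : B) = (O ⟨a.1, a.2, fun c hc => h ⟨c, hc⟩⟩ : B) := by
          rw [hσfun]; simp only [dif_neg h]
        have e2 : (σfun a' : B) = (O ⟨a'.1, a'.2, fun c hc => h' ⟨c, hc⟩⟩ : B) := by
          rw [hσfun]; simp only [dif_neg h']
        have : O ⟨a.1, a.2, fun c hc => h ⟨c, hc⟩⟩ = O ⟨a'.1, a'.2, fun c hc => h' ⟨c, hc⟩⟩ := by
          apply Subtype.ext
          rw [← e1, ← e2, heq]
        have h2 := O.injective this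
        exact Subtype.ext (congrArg (Subtype.val : {a : A // IsAtom a ∧ ∀ c : C, ¬ a ≤ f c} → A) h2)
  have hsurj : Function.Surjective σfun := by
    intro b
    by_cases hb : ∃ c0, (b : B) ≤ g c0
    · obtain ⟨m, hmspec⟩ : ∃ m, ∀ c', (b : B) ≤ g c' ↔ m ≤ c' :=
        ⟨(myLabelExists hB g hg b.2 hb.choose_spec).choose,
         (myLabelExists hB g hg b.2 hb.choose_spec).choose_spec⟩
      set y := (E m).symm ⟨b.1, b.2, hmspec⟩ with hy
      refine ⟨⟨y.1, y.2.1⟩, ?_⟩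
      have hyin : ∃ c0, (y : A) ≤ f c0 := ⟨m, (y.2.2 m).mpr le_rfl⟩
      apply Subtype.ext
      have e1 : (σfun ⟨y.1, y.2.1⟩ : B) =
          (E (myLabelExists hA f hf y.2.1 hyin.choose_spec).choose
            ⟨y.1, y.2.1, (myLabelExists hA f hf y.2.1 hyin.choose_spec).choose_spec⟩ : B) := by
        rw [hσfun]; simp only [dif_pos hyin]
      rw [e1]
      have hmm : (myLabelExists hA f hf y.2.1 hyin.choose_spec).choose = m := by
        have hs := (myLabelExists hA f hf y.2.1 hyin.choose_spec).choose_spec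
        have hs' := y.2.2
        exact le_antisymm ((hs m).mp ((hs' m).mpr le_rfl)) ((hs' _).mp ((hs _).mpr le_rfl))
      have := Econgr _ m hmm
        ⟨y.1, y.2.1, (myLabelExists hA f hf y.2.1 hyin.choose_spec).choose_spec⟩ y rfl
      rw [this, hy]
      simp
    · set a := O.symm ⟨b.1, b.2, fun c hc => hb ⟨c, hc⟩⟩ with ha
      refine ⟨⟨a.1, a.2.1⟩, ?_⟩
      have hain : ¬ ∃ c0, ((⟨a.1, a.2.1⟩ : {a : A // IsAtom a}) : A) ≤ f c0 := by
        rintro ⟨c0, hc0⟩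
        exact a.2.2 c0 hc0
      apply Subtype.ext
      have e1 : (σfun ⟨a.1, a.2.1⟩ : B) = (O ⟨a.1, a.2.1, fun c hc => hain ⟨c, hc⟩⟩ : B) := by
        rw [hσfun]; simp only [dif_neg hain]
      rw [e1]
      have : (⟨a.1, a.2.1, fun c hc => hain ⟨c, hc⟩⟩ :
          {a : A // IsAtom a ∧ ∀ c : C, ¬ a ≤ f c}) = a := Subtype.ext rfl
      rw [this, ha]
      simp
  exact ⟨Equiv.ofBijective σfun ⟨hinj, hsurj⟩, hprop⟩

end sigma


/-- Amalgamation of isomorphisms of generalized Boolean algebras of finite type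
over a common sub-generalized-Boolean-algebra.  If `f : C → A` and `g : C → B` are injective
bottom-preserving lattice embeddings, every `f c` and `g c` contain the same (finite) number
of atoms, and the atoms of `A` not below the image of `f` are equinumerous with the atoms of
`B` not below the image of `g`, then there is an order isomorphism `h : A ≃o B` with
`h ∘ f = g`. -/
theorem genBoolAlg_amalgamate_iso {A B : Type u} {C : Type v}
    [GeneralizedBooleanAlgebra A] [GeneralizedBooleanAlgebra B] [GeneralizedBooleanAlgebra C]
    (hA : ∀ x : A, ∃ s : Finset A, (∀ a ∈ s, IsAtom a) ∧ s.sup id = x)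
    (hB : ∀ x : B, ∃ s : Finset B, (∀ a ∈ s, IsAtom a) ∧ s.sup id = x)
    (f : LatticeHom C A) (g : LatticeHom C B)
    (hf : Function.Injective f) (hg : Function.Injective g)
    (hf0 : f ⊥ = ⊥) (hg0 : g ⊥ = ⊥)
    (hcount : ∀ c : C,
      Nat.card {a : A // IsAtom a ∧ a ≤ f c} = Nat.card {b : B // IsAtom b ∧ b ≤ g c})
    (hout : Cardinal.mk {a : A // IsAtom a ∧ ∀ c : C, ¬ a ≤ f c}
          = Cardinal.mk {b : B // IsAtom b ∧ ∀ c : C, ¬ b ≤ g c}) :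
    ∃ h : A ≃o B, ∀ c : C, h (f c) = g c := by
  classical
  obtain ⟨σ, hσ⟩ := mySigma hA hB f g hf hg hcount hout
  set H : A → B := fun x => ((myFiniteAtoms hA x).toFinset.attach.image
    (fun a => (σ ⟨a.1, ((Set.Finite.mem_toFinset _).mp a.2).1⟩ : B))).sup id with hH
  set H' : B → A := fun y => ((myFiniteAtoms hB y).toFinset.attach.image
    (fun b => (σ.symm ⟨b.1, ((Set.Finite.mem_toFinset _).mp b.2).1⟩ : A))).sup id with hH'
  have hHatoms : ∀ (x : A) (b : B), IsAtom b →
      (b ≤ H x ↔ ∃ a : {a : A // IsAtom a}, (a : A) ≤ x ∧ (σ a : B) = b) := by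
    intro x b hb
    constructor
    · intro hble
      rw [hH] at hble
      obtain ⟨b', hb'mem, hle⟩ := myAtomLeSup hb hble
      obtain ⟨a0, _, rfl⟩ := Finset.mem_image.mp hb'mem
      have hatom : IsAtom (σ ⟨a0.1, ((Set.Finite.mem_toFinset _).mp a0.2).1⟩ : B) :=
        (σ ⟨a0.1, ((Set.Finite.mem_toFinset _).mp a0.2).1⟩).2
      have hbeq : b = (σ ⟨a0.1, ((Set.Finite.mem_toFinset _).mp a0.2).1⟩ : B) :=
        (hatom.le_iff.mp hle).resolve_left hb.1
      exact ⟨⟨a0.1, ((Set.Finite.mem_toFinset _).mp a0.2).1⟩,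
        ((Set.Finite.mem_toFinset _).mp a0.2).2, hbeq.symm⟩
    · rintro ⟨a, hax, hab⟩
      have hmem : a.1 ∈ (myFiniteAtoms hA x).toFinset :=
        (Set.Finite.mem_toFinset _).mpr ⟨a.2, hax⟩
      have himg : (σ a : B) ∈ (myFiniteAtoms hA x).toFinset.attach.image
          (fun a => (σ ⟨a.1, ((Set.Finite.mem_toFinset _).mp a.2).1⟩ : B)) := by
        exact Finset.mem_image.mpr ⟨⟨a.1, hmem⟩, Finset.mem_attach _ _,
          congrArg (fun t => (σ t : B)) (Subtype.ext rfl)⟩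
      rw [hH, ← hab]
      exact Finset.le_sup (f := id) himg
  have hH'atoms : ∀ (y : B) (a : A), IsAtom a →
      (a ≤ H' y ↔ ∃ b : {b : B // IsAtom b}, (b : B) ≤ y ∧ (σ.symm b : A) = a) := by
    intro y a ha
    constructor
    · intro hale
      rw [hH'] at hale
      obtain ⟨a', ha'mem, hle⟩ := myAtomLeSup ha hale
      obtain ⟨b0, _, rfl⟩ := Finset.mem_image.mp ha'mem
      have hatom : IsAtom (σ.symm ⟨b0.1, ((Set.Finite.mem_toFinset _).mp b0.2).1⟩ : A) :=
        (σ.symm ⟨b0.1, ((Set.Finite.mem_toFinset _).mp b0.2).1⟩).2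
      have haeq : a = (σ.symm ⟨b0.1, ((Set.Finite.mem_toFinset _).mp b0.2).1⟩ : A) :=
        (hatom.le_iff.mp hle).resolve_left ha.1
      exact ⟨⟨b0.1, ((Set.Finite.mem_toFinset _).mp b0.2).1⟩,
        ((Set.Finite.mem_toFinset _).mp b0.2).2, haeq.symm⟩
    · rintro ⟨b, hby, hba⟩
      have hmem : b.1 ∈ (myFiniteAtoms hB y).toFinset :=
        (Set.Finite.mem_toFinset _).mpr ⟨b.2, hby⟩
      have himg : (σ.symm b : A) ∈ (myFiniteAtoms hB y).toFinset.attach.image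
          (fun b => (σ.symm ⟨b.1, ((Set.Finite.mem_toFinset _).mp b.2).1⟩ : A)) := by
        exact Finset.mem_image.mpr ⟨⟨b.1, hmem⟩, Finset.mem_attach _ _,
          congrArg (fun t => (σ.symm t : A)) (Subtype.ext rfl)⟩
      rw [hH', ← hba]
      exact Finset.le_sup (f := id) himg
  have hmonoH : ∀ x y : A, x ≤ y → H x ≤ H y := by
    intro x y hxy
    apply myLeOfAtoms hB
    intro b hb hble
    obtain ⟨a, hax, hab⟩ := (hHatoms x b hb).mp hble
    exact (hHatoms y b hb).mpr ⟨a, hax.trans hxy, hab⟩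
  have hmonoH' : ∀ x y : B, x ≤ y → H' x ≤ H' y := by
    intro x y hxy
    apply myLeOfAtoms hA
    intro a ha hale
    obtain ⟨b, hbx, hba⟩ := (hH'atoms x a ha).mp hale
    exact (hH'atoms y a ha).mpr ⟨b, hbx.trans hxy, hba⟩
  have hH'H : ∀ x : A, H' (H x) = x := by
    intro x
    apply le_antisymm
    · apply myLeOfAtoms hA
      intro a ha hale
      obtain ⟨b, hbx, hba⟩ := (hH'atoms (H x) a ha).mp hale
      obtain ⟨a', ha'x, ha'b⟩ := (hHatoms x b.1 b.2).mp hbx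
      have : σ a' = b := Subtype.ext ha'b
      have h2 : σ.symm b = a' := by rw [← this]; exact σ.symm_apply_apply a'
      rw [← hba, h2]
      exact ha'x
    · apply myLeOfAtoms hA
      intro a ha hale
      have h1 : (σ ⟨a, ha⟩ : B) ≤ H x := (hHatoms x _ (σ ⟨a, ha⟩).2).mpr ⟨⟨a, ha⟩, hale, rfl⟩
      have h2 := (hH'atoms (H x) a ha).mpr ⟨σ ⟨a, ha⟩, h1, by rw [σ.symm_apply_apply]⟩
      exact h2
  have hHH' : ∀ y : B, H (H' y) = y := by
    intro y
    apply le_antisymm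
    · apply myLeOfAtoms hB
      intro b hb hble
      obtain ⟨a, hax, hab⟩ := (hHatoms (H' y) b hb).mp hble
      obtain ⟨b', hb'y, hb'a⟩ := (hH'atoms y a.1 a.2).mp hax
      have : σ.symm b' = a := Subtype.ext hb'a
      have h2 : σ a = b' := by rw [← this]; exact σ.apply_symm_apply b'
      rw [← hab, h2]
      exact hb'y
    · apply myLeOfAtoms hB
      intro b hb hble
      have h1 : (σ.symm ⟨b, hb⟩ : A) ≤ H' y :=
        (hH'atoms y _ (σ.symm ⟨b, hb⟩).2).mpr ⟨⟨b, hb⟩, hble, rfl⟩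
      exact (hHatoms (H' y) b hb).mpr ⟨σ.symm ⟨b, hb⟩, h1, by rw [σ.apply_symm_apply]⟩
  refine ⟨{ toEquiv := ⟨H, H', hH'H, hHH'⟩, map_rel_iff' := ?_ }, ?_⟩
  · intro x y
    constructor
    · intro hxy
      have := hmonoH' _ _ hxy
      rwa [hH'H, hH'H] at this
    · exact hmonoH x y
  · intro c
    show H (f c) = g c
    apply le_antisymm
    · apply myLeOfAtoms hB
      intro b hb hble
      obtain ⟨a, hax, hab⟩ := (hHatoms (f c) b hb).mp hble
      rw [← hab]
      exact (hσ a c).mp hax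
    · apply myLeOfAtoms hB
      intro b hb hble
      have haf : (σ.symm ⟨b, hb⟩ : A) ≤ f c := by
        have := (hσ (σ.symm ⟨b, hb⟩) c).mpr
        rw [σ.apply_symm_apply] at this
        exact this hble
      exact (hHatoms (f c) b hb).mpr ⟨σ.symm ⟨b, hb⟩, haf,
        by rw [σ.apply_symm_apply]⟩
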